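/- For ρ > 1, the function k_ρ is strictly decreasing on [0,1]. -/

import Mathlib

theorem k_rho_strictAnti (ρ : ℝ) (hρ : 1 < ρ) :
    StrictAntiOn (fun s : ℝ => ρ/2 * (1 - s^2) + Real.sqrt (ρ^2/4 * (1 - s^2)^2 + s^2))
      (Set.Icc (0:ℝ) 1) := by
  have hρ0 : 0 < ρ := lt_trans one_pos hρ
  apply strictAntiOn_of_deriv_neg (convex_Icc 0 1)
  · apply Continuous.continuousOn
    exact (continuous_const.mul (continuous_const.sub (continuous_pow 2))).add
      (Real.continuous_sqrt.comp (by continuity))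
  · intro s hs
    rw [interior_Icc] at hs
    obtain ⟨hs0, hs1⟩ := hs
    have hg_pos : 0 < ρ^2/4 * (1 - s^2)^2 + s^2 := by
      have h2 : 0 < s^2 := pow_pos hs0 2
      positivity
    set D := Real.sqrt (ρ^2/4 * (1 - s^2)^2 + s^2) with hD
    have hDpos : 0 < D := Real.sqrt_pos.mpr hg_pos
    have hD2 : D^2 = ρ^2/4 * (1 - s^2)^2 + s^2 := Real.sq_sqrt hg_pos.le
    -- derivative of inner function
    have hinner : HasDerivAt (fun x : ℝ => ρ^2/4 * (1 - x^2)^2 + x^2)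
        (ρ^2/4 * (2*(1 - s^2)*(-(2*s))) + 2*s) s := by
      have h1 : HasDerivAt (fun x : ℝ => 1 - x^2) (-(2*s)) s := by
        simpa using (hasDerivAt_pow 2 s).const_sub 1
      have h2 : HasDerivAt (fun x : ℝ => (1 - x^2)^2) (2*(1 - s^2)*(-(2*s))) s := by
        simpa [mul_comm] using (h1.fun_pow 2)
      have h3 := (h2.const_mul (ρ^2/4)).fun_add (by simpa using hasDerivAt_pow 2 s)
      simpa using h3
    have hsqrt : HasDerivAt (fun x : ℝ => Real.sqrt (ρ^2/4 * (1 - x^2)^2 + x^2))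
        ((ρ^2/4 * (2*(1 - s^2)*(-(2*s))) + 2*s) / (2 * D)) s := by
      have h := (Real.hasDerivAt_sqrt (ne_of_gt hg_pos)).comp s hinner
      simp only [Function.comp_def] at h
      refine h.congr_deriv ?_
      rw [hD]
      have hne : Real.sqrt (ρ^2/4 * (1 - s^2)^2 + s^2) ≠ 0 := ne_of_gt (Real.sqrt_pos.mpr hg_pos)
      field_simp
    have hf : HasDerivAt (fun x : ℝ => ρ/2 * (1 - x^2) + Real.sqrt (ρ^2/4 * (1 - x^2)^2 + x^2))
        (ρ/2 * (-(2*s)) + (ρ^2/4 * (2*(1 - s^2)*(-(2*s))) + 2*s) / (2 * D)) s := by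
      have h1 : HasDerivAt (fun x : ℝ => ρ/2 * (1 - x^2)) (ρ/2 * (-(2*s))) s := by
        have : HasDerivAt (fun x : ℝ => 1 - x^2) (-(2*s)) s := by
          simpa using (hasDerivAt_pow 2 s).const_sub 1
        exact this.const_mul (ρ/2)
      exact h1.add hsqrt
    rw [hf.deriv]
    -- now show the derivative is negative
    have h1 : (2 - ρ^2*(1 - s^2))^2 < (2*ρ*D)^2 := by
      have : (2*ρ*D)^2 = 4*ρ^2*(ρ^2/4 * (1 - s^2)^2 + s^2) := by
        rw [mul_pow, mul_pow, hD2]; ring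
      nlinarith [sq_nonneg (1 - s^2)]
    have h2 : 2 - ρ^2*(1 - s^2) < 2*ρ*D := by
      have hb : 0 ≤ 2*ρ*D := by positivity
      exact lt_of_pow_lt_pow_left₀ 2 hb h1
    have h3 : s * (2 - ρ^2*(1 - s^2)) < s * (2*ρ*D) :=
      mul_lt_mul_of_pos_left h2 hs0
    have h4 : (ρ^2/4 * (2*(1 - s^2)*(-(2*s))) + 2*s) / (2 * D) < ρ * s := by
      rw [div_lt_iff₀ (by positivity : (0:ℝ) < 2 * D)]
      nlinarith [h3]
    nlinarith [h4]
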